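/- Let f(k) = (λ^k / k!) · e^{-λ} with λ > 0. For every integer k with 1 ≤ k ≤ 2λ, f(k) ≤ (1/√(2πk)) · exp(-(k-λ)²/(3λ)). -/

import Mathlib

open Real

-- Padé bound: log x ≥ 2(x-1)/(x+1) for x ≥ 1
lemma pade {x : ℝ} (hx : 1 ≤ x) : 2 * (x - 1) / (x + 1) ≤ Real.log x := by
  set g : ℝ → ℝ := fun x => Real.log x - 2 + 4 * (x + 1)⁻¹ with hg
  have hd : ∀ y : ℝ, 0 < y → HasDerivAt g (y⁻¹ + 4 * (-1 / (y + 1) ^ 2)) y := by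
    intro y hy
    have h1 : HasDerivAt (fun z : ℝ => (z + 1)⁻¹) (-1 / (y + 1) ^ 2) y := by
      exact ((hasDerivAt_id' y).add_const 1).inv (ne_of_gt (by show (0:ℝ) < y + 1; linarith))
    exact ((Real.hasDerivAt_log hy.ne').sub_const 2).add (h1.const_mul 4)
  have hmono : MonotoneOn g (Set.Ici 1) := by
    apply monotoneOn_of_deriv_nonneg (convex_Ici 1)
    · apply ContinuousOn.add
      · exact ((Real.continuousOn_log.mono (by intro z hz; simp at hz ⊢; linarith)).sub
          continuousOn_const)
      · exact continuousOn_const.mul ((continuousOn_id.add continuousOn_const).inv₀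
          (fun z hz => by have : (1:ℝ) ≤ z := hz; intro h; simp at h; linarith))
    · intro y hy
      rw [interior_Ici] at hy
      exact ((hd y (by simp at hy; linarith)).differentiableAt).differentiableWithinAt
    · intro y hy
      rw [interior_Ici] at hy
      simp only [Set.mem_Ioi] at hy
      have hy0 : (0:ℝ) < y := by linarith
      rw [(hd y hy0).deriv]
      have h4 : 4 / (y + 1) ^ 2 ≤ y⁻¹ := by
        rw [div_le_iff₀ (by positivity), inv_mul_eq_div, le_div_iff₀ hy0]
        nlinarith
      have : 4 * (-1 / (y + 1) ^ 2) = -(4 / (y + 1) ^ 2) := by ring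
      rw [this]; linarith
  have h1 : g 1 ≤ g x := hmono (by simp) hx hx
  have hg1 : g 1 = 0 := by norm_num [hg]
  have hne : x + 1 ≠ 0 := by positivity
  rw [hg1, hg] at h1
  rw [div_le_iff₀ (by positivity)]
  simp only at h1
  have : 2 - 4 * (x + 1)⁻¹ ≤ Real.log x := by linarith
  calc 2 * (x - 1) = (2 - 4 * (x + 1)⁻¹) * (x + 1) := by field_simp; ring
    _ ≤ Real.log x * (x + 1) := by
        apply mul_le_mul_of_nonneg_right this (by linarith)

-- Key inequality: x log x - x + 1 ≥ (x-1)²/3 for 0 < x ≤ 2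
lemma key {x : ℝ} (hx : 0 < x) (hx2 : x ≤ 2) :
    (x - 1) ^ 2 / 3 ≤ x * Real.log x - x + 1 := by
  set h : ℝ → ℝ := fun x => x * Real.log x - x + 1 - (x - 1) ^ 2 / 3 with hh
  have hd : ∀ y : ℝ, 0 < y → HasDerivAt h (Real.log y - 2 * (y - 1) / 3) y := by
    intro y hy
    have h1 : HasDerivAt (fun z : ℝ => z * Real.log z) (1 * Real.log y + y * y⁻¹) y :=
      (hasDerivAt_id y).mul (Real.hasDerivAt_log hy.ne')
    have h2 : HasDerivAt (fun z : ℝ => (z - 1) ^ 2 / 3) (2 * (y - 1) ^ 1 * 1 / 3) y :=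
      (((hasDerivAt_id y).sub_const 1).pow 2).div_const 3
    have := ((h1.sub (hasDerivAt_id y)).add_const 1).sub h2
    exact this.congr_deriv (by rw [mul_inv_cancel₀ hy.ne']; ring)
  have hcont : ∀ s : Set ℝ, (∀ z ∈ s, (0:ℝ) < z) → ContinuousOn h s := by
    intro s hs
    apply ContinuousOn.sub
    · apply ContinuousOn.add
      · exact (continuousOn_id.mul (Real.continuousOn_log.mono
          (by intro z hz; exact (hs z hz).ne'))).sub continuousOn_id
      · exact continuousOn_const
    · fun_prop
  have h1 : h 1 = 0 := by norm_num [hh]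
  rcases le_total x 1 with hx1 | hx1
  · -- antitone on Ioc 0 1
    have hanti : AntitoneOn h (Set.Ioc 0 1) := by
      apply antitoneOn_of_deriv_nonpos (convex_Ioc 0 1)
      · exact hcont _ (fun z hz => hz.1)
      · intro y hy
        rw [interior_Ioc] at hy
        exact ((hd y hy.1).differentiableAt).differentiableWithinAt
      · intro y hy
        rw [interior_Ioc] at hy
        rw [(hd y hy.1).deriv]
        have := Real.log_le_sub_one_of_pos hy.1
        have : Real.log y ≤ 2 * (y - 1) / 3 := by
          rw [div_eq_mul_inv]; nlinarith [hy.2]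
        linarith
    have := hanti (Set.mem_Ioc.mpr ⟨hx, hx1⟩) (Set.mem_Ioc.mpr ⟨one_pos, le_refl 1⟩) hx1
    rw [h1] at this
    simpa [hh] using this
  · -- monotone on Icc 1 2
    have hmono : MonotoneOn h (Set.Icc 1 2) := by
      apply monotoneOn_of_deriv_nonneg (convex_Icc 1 2)
      · exact hcont _ (fun z hz => by have := hz.1; linarith)
      · intro y hy
        rw [interior_Icc] at hy
        exact ((hd y (by linarith [hy.1])).differentiableAt).differentiableWithinAt
      · intro y hy
        rw [interior_Icc] at hy
        have hy0 : (0:ℝ) < y := by linarith [hy.1]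
        rw [(hd y hy0).deriv]
        have hp := pade hy.1.le
        have : 2 * (y - 1) / 3 ≤ 2 * (y - 1) / (y + 1) := by
          apply div_le_div_of_nonneg_left ?_ (by linarith) (by linarith [hy.2])
          · linarith [hy.1]
        linarith
    have := hmono (Set.mem_Icc.mpr ⟨le_refl 1, by norm_num⟩) (Set.mem_Icc.mpr ⟨hx1, hx2⟩) hx1
    rw [h1] at this
    simpa [hh] using this

theorem stmt_5 (lam : ℝ) (hlam : 0 < lam) (k : ℕ) (hk1 : 1 ≤ k)
    (hk2 : (k : ℝ) ≤ 2 * lam) :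
    lam ^ k / (Nat.factorial k) * Real.exp (-lam) ≤
      1 / Real.sqrt (2 * Real.pi * k) * Real.exp (-((k : ℝ) - lam) ^ 2 / (3 * lam)) := by
  set c : ℝ := (k : ℝ) with hc
  have hc0 : (0:ℝ) < c := by rw [hc]; exact_mod_cast Nat.pos_of_ne_zero (by omega)
  -- Stirling lower bound
  have hstir : Real.sqrt π ≤ Stirling.stirlingSeq k := by
    obtain ⟨m, rfl⟩ : ∃ m, k = m + 1 := ⟨k - 1, (Nat.succ_pred_eq_of_pos hk1).symm⟩
    have ht : Filter.Tendsto (Stirling.stirlingSeq ∘ Nat.succ) Filter.atTop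
        (nhds (Real.sqrt π)) :=
      Stirling.tendsto_stirlingSeq_sqrt_pi.comp (Filter.tendsto_add_atTop_nat 1)
    exact Stirling.stirlingSeq'_antitone.le_of_tendsto ht m
  have hden : (0:ℝ) < Real.sqrt (2 * c) * (c / Real.exp 1) ^ k := by positivity
  have hfact : Real.sqrt π * (Real.sqrt (2 * c) * (c / Real.exp 1) ^ k) ≤
      (Nat.factorial k : ℝ) := by
    rw [Stirling.stirlingSeq, le_div_iff₀ hden] at hstir
    exact hstir
  have hsq : Real.sqrt (2 * π * c) = Real.sqrt π * Real.sqrt (2 * c) := by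
    rw [show 2 * π * c = π * (2 * c) by ring, Real.sqrt_mul Real.pi_pos.le]
  -- exponent inequality
  have hkey' : (c - lam) ^ 2 / (3 * lam) ≤ c * (Real.log c - Real.log lam) - c + lam := by
    have hkey := key (x := c / lam) (by positivity) (by rw [div_le_iff₀ hlam]; linarith)
    rw [Real.log_div hc0.ne' hlam.ne'] at hkey
    have h := mul_le_mul_of_nonneg_left hkey hlam.le
    have e1 : lam * ((c / lam - 1) ^ 2 / 3) = (c - lam) ^ 2 / (3 * lam) := by
      field_simp
    have e2 : lam * (c / lam * (Real.log c - Real.log lam) - c / lam + 1) =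
        c * (Real.log c - Real.log lam) - c + lam := by
      field_simp
    rw [e1, e2] at h
    exact h
  -- main chain
  have hmain : lam ^ k / (c / Real.exp 1) ^ k * Real.exp (-lam) ≤
      Real.exp (-((c : ℝ) - lam) ^ 2 / (3 * lam)) := by
    have hl : lam ^ k = Real.exp ((k : ℝ) * Real.log lam) := by
      rw [Real.exp_nat_mul, Real.exp_log hlam]
    have hr : (c / Real.exp 1) ^ k = Real.exp ((k : ℝ) * (Real.log c - 1)) := by
      rw [Real.exp_nat_mul, ← Real.exp_log (show (0:ℝ) < c / Real.exp 1 by positivity),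
        Real.log_div hc0.ne' (Real.exp_pos 1).ne', Real.log_exp]
    rw [hl, hr, ← Real.exp_sub, ← Real.exp_add, Real.exp_le_exp]
    rw [hc] at hkey' ⊢
    rw [neg_div]
    linarith
  calc lam ^ k / (Nat.factorial k : ℝ) * Real.exp (-lam)
      ≤ lam ^ k / (Real.sqrt π * (Real.sqrt (2 * c) * (c / Real.exp 1) ^ k)) *
        Real.exp (-lam) := by
        apply mul_le_mul_of_nonneg_right _ (Real.exp_pos _).le
        apply div_le_div_of_nonneg_left (by positivity) (by positivity) hfact
    _ = 1 / Real.sqrt (2 * π * c) * (lam ^ k / (c / Real.exp 1) ^ k * Real.exp (-lam)) := by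
        rw [hsq]; field_simp
    _ ≤ 1 / Real.sqrt (2 * π * c) * Real.exp (-((c : ℝ) - lam) ^ 2 / (3 * lam)) := by
        apply mul_le_mul_of_nonneg_left hmain (by positivity)
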